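/- arXiv:2211.05873 — 2 statements merged into one kernel-verified Lean document; each statement's English description precedes it below -/
import Mathlib

section
/- Let C be an (n,M,X,P)-code from the constructed layered family: for each codeword u(i), the decoding set is the product D_i = D_{i,1} × … × D_{i,n} with D_{i,m} = G_c^{(ℓ)} when u_m(i) = x_c^{(ℓ)}, where G_c^{(ℓ)} = {y ∈ ℂ : |y − x_c^{(ℓ)}| ≤ r_c} and the disks G_c^{(ℓ)} are pairwise disjoint over all symbols. Then the average decoding error probability equals γ(C) = 1 − (1/M) ∑_{i=1}^M ∏_{c=1}^C ( 1 − exp(−r_c²/σ²) )^{ n ∑_{ℓ=1}^{L_c} P_{u(i)}(x_c^{(ℓ)}) }. In particular, if C is an (n,M,X,P,ε,B,δ)-code then ε ≥ 1 − (1/M) ∑_{i=1}^M ∏_{c=1}^C (1 − exp(−r_c²/σ²))^{ n ∑_{ℓ=1}^{L_c} P_{u(i)}(x_c^{(ℓ)}) }. -/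
open MeasureTheory Finset

/-- The average decoding error probability of a code with per-symbol decoding
sets (the decoding set of a codeword is the product of the decoding balls of
its symbols) over the complex AWGN channel with noise variance σ². -/
noncomputable def avgDEP (n M : ℕ) (σ : ℝ) {S : Type} (sym : S → ℂ) (rad : S → ℝ)
    (w : Fin M → Fin n → S) : ℝ :=
  (1 / (M : ℝ)) * ∑ i,
    (1 - ∫ y in Set.univ.pi (fun m => Metric.closedBall (sym (w i m)) (rad (w i m))),
      ∏ m, (1 / (Real.pi * σ ^ 2)) *
        Real.exp (-(‖y m - sym (w i m)‖) ^ 2 / σ ^ 2))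

section aux
open Real Set

lemma radial_ftc (σ : ℝ) (hσ : 0 < σ) (r : ℝ) (hr : 0 ≤ r) :
    ∫ ρ in (0:ℝ)..r, ρ * ((1 / (Real.pi * σ ^ 2)) * Real.exp (-ρ ^ 2 / σ ^ 2))
      = (1 / (2 * Real.pi)) * (1 - Real.exp (-r ^ 2 / σ ^ 2)) := by
  have hπ := Real.pi_pos
  have h := intervalIntegral.integral_eq_sub_of_hasDerivAt
    (f := fun ρ : ℝ => -(1 / (2 * Real.pi)) * Real.exp (-ρ ^ 2 / σ ^ 2))
    (f' := fun ρ : ℝ => ρ * ((1 / (Real.pi * σ ^ 2)) * Real.exp (-ρ ^ 2 / σ ^ 2)))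
    (a := 0) (b := r) ?_ ?_
  · rw [h]
    rw [show ((0:ℝ)^2) = 0 by ring, neg_zero, zero_div, Real.exp_zero]
    ring
  · intro x _
    have h1 : HasDerivAt (fun ρ : ℝ => -ρ ^ 2 / σ ^ 2) (-(2 * x) / σ ^ 2) x := by
      simpa using ((hasDerivAt_pow 2 x).neg.div_const (σ ^ 2))
    have h2 := (h1.exp).const_mul (-(1 / (2 * Real.pi)))
    convert h2 using 1
    · rfl
    field_simp
  · apply Continuous.intervalIntegrable
    continuity

lemma gauss_disk (σ : ℝ) (hσ : 0 < σ) (x : ℂ) (r : ℝ) (hr : 0 < r) :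
    ∫ y in Metric.closedBall x r,
      (1 / (Real.pi * σ ^ 2)) * Real.exp (-(‖y - x‖) ^ 2 / σ ^ 2)
      = 1 - Real.exp (-r ^ 2 / σ ^ 2) := by
  have hπ := Real.pi_pos
  have htrans : ∫ y in Metric.closedBall x r,
      (1 / (Real.pi * σ ^ 2)) * Real.exp (-(‖y - x‖) ^ 2 / σ ^ 2)
      = ∫ y in Metric.closedBall (0:ℂ) r,
        (1 / (Real.pi * σ ^ 2)) * Real.exp (-(‖y‖) ^ 2 / σ ^ 2) := by
    have hemb : MeasurableEmbedding (fun y : ℂ => y + x) :=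
      (MeasurableEquiv.addRight x).measurableEmbedding
    have := (measurePreserving_add_right (volume : Measure ℂ) x).setIntegral_preimage_emb hemb
      (fun y => (1 / (Real.pi * σ ^ 2)) * Real.exp (-(‖y - x‖) ^ 2 / σ ^ 2))
      (Metric.closedBall x r)
    rw [← this]
    have hpre : (fun y : ℂ => y + x) ⁻¹' Metric.closedBall x r = Metric.closedBall 0 r := by
      ext y
      simp [Complex.dist_eq]
    rw [hpre]
    congr 1
    ext y
    simp
  rw [htrans]
  have hind : ∫ y in Metric.closedBall (0:ℂ) r,
      (1 / (Real.pi * σ ^ 2)) * Real.exp (-(‖y‖) ^ 2 / σ ^ 2)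
      = ∫ y : ℂ, (Metric.closedBall (0:ℂ) r).indicator
          (fun y => (1 / (Real.pi * σ ^ 2)) * Real.exp (-(‖y‖) ^ 2 / σ ^ 2)) y :=
    (integral_indicator measurableSet_closedBall).symm
  rw [hind, ← Complex.integral_comp_polarCoord_symm, polarCoord_target]
  have hcongr : ∫ p in Ioi (0:ℝ) ×ˢ Ioo (-Real.pi) Real.pi,
      p.1 • (Metric.closedBall (0:ℂ) r).indicator
        (fun y => (1 / (Real.pi * σ ^ 2)) * Real.exp (-(‖y‖) ^ 2 / σ ^ 2))
        (Complex.polarCoord.symm p)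
      = ∫ p in Ioi (0:ℝ) ×ˢ Ioo (-Real.pi) Real.pi,
        (Set.Ioc (0:ℝ) r).indicator
          (fun ρ => ρ * ((1 / (Real.pi * σ ^ 2)) * Real.exp (-ρ ^ 2 / σ ^ 2))) p.1 * 1 := by
    refine setIntegral_congr_fun (measurableSet_Ioi.prod measurableSet_Ioo) (fun p hp => ?_)
    obtain ⟨hp1, -⟩ := hp
    rw [Set.mem_Ioi] at hp1
    have habs : ‖Complex.polarCoord.symm p‖ = p.1 := by
      rw [Complex.norm_polarCoord_symm, abs_of_pos hp1]
    have hmem : Complex.polarCoord.symm p ∈ Metric.closedBall (0:ℂ) r ↔ p.1 ≤ r := by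
      rw [Metric.mem_closedBall, Complex.dist_eq, sub_zero, habs]
    by_cases hpr : p.1 ≤ r
    · rw [Set.indicator_of_mem (hmem.mpr hpr),
        Set.indicator_of_mem (show p.1 ∈ Set.Ioc (0:ℝ) r from ⟨hp1, hpr⟩),
        habs, smul_eq_mul, mul_one]
    · rw [Set.indicator_of_notMem (fun h => hpr (hmem.mp h)),
        Set.indicator_of_notMem (by simp [hpr] : p.1 ∉ Set.Ioc (0:ℝ) r),
        smul_zero, zero_mul]
  rw [hcongr, Measure.volume_eq_prod,
    setIntegral_prod_mul ((Set.Ioc (0:ℝ) r).indicator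
      (fun ρ => ρ * (1 / (Real.pi * σ ^ 2) * Real.exp (-ρ ^ 2 / σ ^ 2)))) (fun _ => (1:ℝ))]
  have h1 : ∫ ρ in Ioi (0:ℝ), (Set.Ioc (0:ℝ) r).indicator
      (fun ρ => ρ * ((1 / (Real.pi * σ ^ 2)) * Real.exp (-ρ ^ 2 / σ ^ 2))) ρ
      = (1 / (2 * Real.pi)) * (1 - Real.exp (-r ^ 2 / σ ^ 2)) := by
    rw [setIntegral_indicator measurableSet_Ioc]
    rw [show Ioi (0:ℝ) ∩ Ioc 0 r = Ioc 0 r by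
      rw [Set.inter_eq_right]; exact Ioc_subset_Ioi_self]
    rw [← intervalIntegral.integral_of_le hr.le]
    exact radial_ftc σ hσ r hr.le
  have h2 : ∫ _ in Ioo (-Real.pi) Real.pi, (1:ℝ) = 2 * Real.pi := by
    simp [Real.volume_Ioo, ENNReal.toReal_ofReal (by positivity : (0:ℝ) ≤ Real.pi + Real.pi)]
    rw [max_eq_left (by positivity : (0:ℝ) ≤ Real.pi + Real.pi)]
    ring
  rw [h1, h2]
  field_simp

end aux

lemma pi_ball_integral {n : ℕ} (σ : ℝ) (hσ : 0 < σ) (x : Fin n → ℂ) (R : Fin n → ℝ)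
    (hR : ∀ m, 0 < R m) :
    ∫ y in Set.univ.pi (fun m => Metric.closedBall (x m) (R m)),
      ∏ m, (1 / (Real.pi * σ ^ 2)) * Real.exp (-(‖y m - x m‖) ^ 2 / σ ^ 2)
      = ∏ m, (1 - Real.exp (-(R m) ^ 2 / σ ^ 2)) := by
  set f : Fin n → ℂ → ℝ :=
    fun m z => (1 / (Real.pi * σ ^ 2)) * Real.exp (-(‖z - x m‖) ^ 2 / σ ^ 2) with hf
  set B : Fin n → Set ℂ := fun m => Metric.closedBall (x m) (R m) with hB
  have hBmeas : MeasurableSet (Set.univ.pi B) :=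
    MeasurableSet.univ_pi (fun m => measurableSet_closedBall)
  rw [← integral_indicator hBmeas]
  have key : ∀ y : Fin n → ℂ, (Set.univ.pi B).indicator (fun y => ∏ m, f m (y m)) y
      = ∏ m, (B m).indicator (f m) (y m) := by
    intro y
    by_cases h : y ∈ Set.univ.pi B
    · rw [Set.indicator_of_mem h]
      exact Finset.prod_congr rfl fun m _ => (Set.indicator_of_mem (h m (Set.mem_univ m)) _).symm
    · rw [Set.indicator_of_notMem h]
      rw [Set.mem_univ_pi] at h
      push_neg at h
      obtain ⟨m, hm⟩ := h
      exact (Finset.prod_eq_zero (Finset.mem_univ m) (Set.indicator_of_notMem hm _)).symm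
  refine (integral_congr_ae (Filter.Eventually.of_forall key)).trans ?_
  refine (MeasureTheory.integral_fintype_prod_eq_prod (fun m => (B m).indicator (f m))).trans ?_
  refine Finset.prod_congr rfl fun m _ => ?_
  rw [integral_indicator measurableSet_closedBall]
  exact gauss_disk σ hσ (x m) (R m) (hR m)

/-- Achievability: closed form for the average DEP of a code from the
constructed layered family, and the resulting lower bound on ε. -/
theorem layered_dep_formula
    (n M C : ℕ) (hn : 0 < n) (hM : 0 < M)
    (σ P ε : ℝ) (hσ : 0 < σ)
    -- the layered constellation
    (Lc : Fin C → ℕ) (A : Fin C → ℝ) (α : Fin C → ℝ) (r : Fin C → ℝ)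
    (hA : ∀ c, 0 < A c) (hAanti : StrictAnti A) (hr : ∀ c, 0 < r c)
    (sym : ((c : Fin C) × Fin (Lc c)) → ℂ)
    (hsym : ∀ s : (c : Fin C) × Fin (Lc c),
      sym s = Complex.ofReal (A s.1) *
        Complex.exp (Complex.I * Complex.ofReal
          (2 * Real.pi * ((s.2 : ℕ) : ℝ) / ((Lc s.1 : ℕ) : ℝ) + α s.1)))
    (hamp : ∀ s : (c : Fin C) × Fin (Lc c), ‖sym s‖ ≤ P)
    -- the decoding disks are pairwise disjoint
    (hdisj : ∀ s t : (c : Fin C) × Fin (Lc c), s ≠ t →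
      Disjoint (Metric.closedBall (sym s) (r s.1)) (Metric.closedBall (sym t) (r t.1)))
    -- the codewords (as sequences of symbols of the constellation)
    (w : Fin M → Fin n → (c : Fin C) × Fin (Lc c))
    -- the type of each codeword
    (Pu : Fin M → ℂ → ℝ)
    (hPu : ∀ i z, Pu i z = (1 / (n : ℝ)) * ∑ m, if sym (w i m) = z then (1 : ℝ) else 0) :
    avgDEP n M σ sym (fun s => r s.1) w
      = 1 - (1 / (M : ℝ)) * ∑ i, ∏ c,
          (1 - Real.exp (-(r c) ^ 2 / σ ^ 2)) ^
            ((n : ℝ) * ∑ ℓ : Fin (Lc c), Pu i (sym ⟨c, ℓ⟩)) ∧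
    (avgDEP n M σ sym (fun s => r s.1) w ≤ ε →
      ε ≥ 1 - (1 / (M : ℝ)) * ∑ i, ∏ c,
          (1 - Real.exp (-(r c) ^ 2 / σ ^ 2)) ^
            ((n : ℝ) * ∑ ℓ : Fin (Lc c), Pu i (sym ⟨c, ℓ⟩))) := by
  have hinj : Function.Injective sym := by
    intro s t hst
    by_contra hne
    have hd := hdisj s t hne
    have h1 : sym s ∈ Metric.closedBall (sym s) (r s.1) :=
      Metric.mem_closedBall_self (hr s.1).le
    have h2 : sym s ∈ Metric.closedBall (sym t) (r t.1) := by
      rw [hst]; exact Metric.mem_closedBall_self (hr t.1).le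
    exact Set.disjoint_left.mp hd h1 h2
  have hexp : ∀ i c, (n : ℝ) * ∑ ℓ : Fin (Lc c), Pu i (sym ⟨c, ℓ⟩)
      = ((Finset.univ.filter (fun m => (w i m).1 = c)).card : ℝ) := by
    intro i c
    simp_rw [hPu]
    rw [← Finset.mul_sum, ← mul_assoc, mul_one_div,
      div_self (Nat.cast_ne_zero.mpr hn.ne' : (n:ℝ) ≠ 0), one_mul, Finset.sum_comm]
    have hm : ∀ m, (∑ ℓ : Fin (Lc c), if sym (w i m) = sym ⟨c, ℓ⟩ then (1:ℝ) else 0)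
        = if (w i m).1 = c then 1 else 0 := by
      intro m
      simp_rw [hinj.eq_iff]
      by_cases h : (w i m).1 = c
      · subst h
        rw [if_pos rfl]
        simp [Sigma.ext_iff]
      · rw [if_neg h]
        refine Finset.sum_eq_zero fun ℓ _ => ?_
        rw [if_neg]
        intro he
        exact h (congrArg Sigma.fst he)
    simp_rw [hm]
    rw [Finset.sum_boole]
  have hprod : ∀ i, (∏ m, (1 - Real.exp (-(r ((w i m).1)) ^ 2 / σ ^ 2)))
      = ∏ c, (1 - Real.exp (-(r c) ^ 2 / σ ^ 2)) ^
          ((n : ℝ) * ∑ ℓ : Fin (Lc c), Pu i (sym ⟨c, ℓ⟩)) := by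
    intro i
    rw [← Finset.prod_fiberwise_of_maps_to (g := fun m => (w i m).1)
      (fun m _ => Finset.mem_univ ((w i m).1))
      (fun m => 1 - Real.exp (-(r ((w i m).1)) ^ 2 / σ ^ 2))]
    refine Finset.prod_congr rfl fun c _ => ?_
    rw [hexp i c, Real.rpow_natCast,
      Finset.prod_congr rfl (fun m hm => by rw [(Finset.mem_filter.mp hm).2]),
      Finset.prod_const]
  have hint : ∀ i, (∫ y in Set.univ.pi
        (fun m => Metric.closedBall (sym (w i m)) (r ((w i m).1))),
      ∏ m, (1 / (Real.pi * σ ^ 2)) *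
        Real.exp (-(‖y m - sym (w i m)‖) ^ 2 / σ ^ 2))
      = ∏ m, (1 - Real.exp (-(r ((w i m).1)) ^ 2 / σ ^ 2)) := by
    intro i
    exact pi_ball_integral σ hσ (fun m => sym (w i m)) (fun m => r ((w i m).1))
      (fun m => hr _)
  have hmain : avgDEP n M σ sym (fun s => r s.1) w
      = 1 - (1 / (M : ℝ)) * ∑ i, ∏ c,
          (1 - Real.exp (-(r c) ^ 2 / σ ^ 2)) ^
            ((n : ℝ) * ∑ ℓ : Fin (Lc c), Pu i (sym ⟨c, ℓ⟩)) := by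
    rw [avgDEP]
    simp_rw [hint, hprod]
    rw [Finset.sum_sub_distrib, Finset.sum_const, Finset.card_univ, Fintype.card_fin,
      nsmul_eq_mul, mul_one, mul_sub,
      one_div_mul_cancel (Nat.cast_ne_zero.mpr hM.ne' : (M:ℝ) ≠ 0)]
  exact ⟨hmain, fun h => by rw [hmain] at h; exact h⟩
end

section
/- Let C be an (n,M,X,P)-code from the constructed layered family whose per-symbol decoding disks all have the same radius r > 0 (r_c = r for all c) and are pairwise disjoint, with product decoding sets. Then the average decoding error probability equals γ(C) = 1 − (1 − exp(−r²/σ²))ⁿ, and consequently, if C is an (n,M,X,P,ε,B,δ)-code with 0 < ε < 1, then r ≥ √( σ² · log( 1 / (1 − (1−ε)^{1/n}) ) ). -/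
open MeasureTheory Finset

lemma radial_int (σ r c : ℝ) (hσ : 0 < σ) (hr : 0 < r) :
    ∫ x in (0:ℝ)..r, x * (c * Real.exp (-x ^ 2 / σ ^ 2))
      = c * (σ ^ 2 / 2) * (1 - Real.exp (-r ^ 2 / σ ^ 2)) := by
  have hσ2 : (σ:ℝ)^2 ≠ 0 := by positivity
  have key : ∀ x ∈ Set.uIcc (0:ℝ) r,
      HasDerivAt (fun x : ℝ => (-(σ ^ 2 / 2) * c) * Real.exp (-x ^ 2 / σ ^ 2))
        (x * (c * Real.exp (-x ^ 2 / σ ^ 2))) x := by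
    intro x _
    have h1 : HasDerivAt (fun x : ℝ => -x ^ 2 / σ ^ 2) (-(2 * x) / σ ^ 2) x := by
      simpa using ((hasDerivAt_pow 2 x).neg.div_const (σ ^ 2))
    have h2 := (h1.exp).const_mul (-(σ ^ 2 / 2) * c)
    refine h2.congr_deriv ?_
    field_simp
  have hint : IntervalIntegrable (fun x : ℝ => x * (c * Real.exp (-x ^ 2 / σ ^ 2)))
      MeasureTheory.volume 0 r := by
    apply Continuous.intervalIntegrable
    continuity
  rw [intervalIntegral.integral_eq_sub_of_hasDerivAt key hint]
  simp [Real.exp_zero]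
  ring

lemma disk_int (σ r : ℝ) (hσ : 0 < σ) (hr : 0 < r) (x : ℂ) :
    ∫ y in Metric.closedBall x r,
      (1 / (Real.pi * σ ^ 2)) * Real.exp (-(‖y - x‖) ^ 2 / σ ^ 2)
      = 1 - Real.exp (-r ^ 2 / σ ^ 2) := by
  have hσ2 : (σ:ℝ)^2 ≠ 0 := by positivity
  have hπ : Real.pi ≠ 0 := Real.pi_ne_zero
  set c : ℝ := 1 / (Real.pi * σ ^ 2) with hc
  set g : ℂ → ℝ := Set.indicator (Metric.closedBall (0:ℂ) r)
    (fun z => c * Real.exp (-(‖z‖) ^ 2 / σ ^ 2)) with hg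
  have htrans : ∀ y : ℂ,
      (Metric.closedBall x r).indicator
        (fun y => c * Real.exp (-(‖y - x‖) ^ 2 / σ ^ 2)) y = g (y - x) := by
    intro y
    have hmem : y - x ∈ Metric.closedBall (0:ℂ) r ↔ y ∈ Metric.closedBall x r := by
      simp [mem_closedBall_zero_iff, Metric.mem_closedBall, Complex.dist_eq]
    by_cases hy : y ∈ Metric.closedBall x r
    · rw [Set.indicator_of_mem hy, hg, Set.indicator_of_mem (hmem.mpr hy)]
    · rw [Set.indicator_of_notMem hy, hg,
        Set.indicator_of_notMem (fun hcon => hy (hmem.mp hcon))]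
  rw [← integral_indicator measurableSet_closedBall]
  simp_rw [htrans]
  rw [integral_sub_right_eq_self g x]
  -- polar coordinates
  set h : ℝ → ℝ := fun t => if |t| ≤ r then c * Real.exp (-t ^ 2 / σ ^ 2) else 0 with hh
  have hgh : ∀ p : ℝ × ℝ, g (Complex.polarCoord.symm p) = h p.1 := by
    intro p
    have habs : ‖Complex.polarCoord.symm p‖ = |p.1| := by
      rw [Complex.norm_polarCoord_symm]
    by_cases hcase : |p.1| ≤ r
    · rw [hg, Set.indicator_of_mem (mem_closedBall_zero_iff.mpr (habs ▸ hcase)), hh]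
      rw [habs, sq_abs]
      simp [hcase]
    · rw [hg, Set.indicator_of_notMem
        (fun hcon => hcase (habs ▸ mem_closedBall_zero_iff.mp hcon)), hh]
      simp [hcase]
  calc ∫ z, g z
      = ∫ p in Set.Ioi (0:ℝ) ×ˢ Set.Ioo (-Real.pi) Real.pi, p.1 * h p.1 := by
        rw [← Complex.integral_comp_polarCoord_symm, polarCoord_target]
        simp_rw [smul_eq_mul, hgh]
    _ = (∫ t in Set.Ioi (0:ℝ), t * h t) * ∫ _ in Set.Ioo (-Real.pi) Real.pi, (1:ℝ) := by
        rw [← setIntegral_prod_mul, Measure.volume_eq_prod]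
        simp_rw [mul_one]
    _ = (∫ t in Set.Ioi (0:ℝ), t * h t) * (2 * Real.pi) := by
        congr 1
        rw [setIntegral_const, smul_eq_mul, mul_one,
          Real.volume_real_Ioo_of_le (by linarith [Real.pi_pos])]
        ring
    _ = 1 - Real.exp (-r ^ 2 / σ ^ 2) := by
        have h1 : ∀ t ∈ Set.Ioi (0:ℝ), t * h t
            = Set.indicator (Set.Iic r) (fun t => t * (c * Real.exp (-t ^ 2 / σ ^ 2))) t := by
          intro t ht
          rw [Set.mem_Ioi] at ht
          by_cases h2 : t ≤ r <;>
            simp [hh, Set.indicator_apply, h2, abs_of_pos ht]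
        rw [setIntegral_congr_fun measurableSet_Ioi h1,
          setIntegral_indicator measurableSet_Iic, Set.Ioi_inter_Iic,
          ← intervalIntegral.integral_of_le hr.le, radial_int σ r c hσ hr, hc]
        field_simp

lemma prod_int (n : ℕ) (σ r : ℝ) (hσ : 0 < σ) (hr : 0 < r) (z : Fin n → ℂ) :
    ∫ y in Set.univ.pi (fun m => Metric.closedBall (z m) r),
      ∏ m, (1 / (Real.pi * σ ^ 2)) * Real.exp (-(‖y m - z m‖) ^ 2 / σ ^ 2)
      = (1 - Real.exp (-r ^ 2 / σ ^ 2)) ^ n := by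
  set f : Fin n → ℂ → ℝ :=
    fun m t => (1 / (Real.pi * σ ^ 2)) * Real.exp (-(‖t - z m‖) ^ 2 / σ ^ 2) with hf
  rw [← integral_indicator (MeasurableSet.univ_pi fun m => measurableSet_closedBall)]
  have hind : ∀ y : Fin n → ℂ,
      (Set.univ.pi fun m => Metric.closedBall (z m) r).indicator
        (fun y => ∏ m, f m (y m)) y
      = ∏ m, (Metric.closedBall (z m) r).indicator (f m) (y m) := by
    intro y
    by_cases hy : y ∈ Set.univ.pi fun m => Metric.closedBall (z m) r
    · rw [Set.indicator_of_mem hy]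
      exact Finset.prod_congr rfl fun m _ =>
        (Set.indicator_of_mem (hy m (Set.mem_univ m)) (f m)).symm
    · rw [Set.indicator_of_notMem hy]
      rw [Set.mem_pi] at hy
      push_neg at hy
      obtain ⟨m, _, hm⟩ := hy
      exact (Finset.prod_eq_zero (Finset.mem_univ m)
        (Set.indicator_of_notMem hm (f m))).symm
  refine (integral_congr_ae (Filter.Eventually.of_forall hind)).trans ?_
  rw [MeasureTheory.integral_fintype_prod_volume_eq_prod (ι := Fin n)
    (f := fun m => (Metric.closedBall (z m) r).indicator (f m))]
  have : ∀ m, (∫ t, (Metric.closedBall (z m) r).indicator (f m) t)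
      = 1 - Real.exp (-r ^ 2 / σ ^ 2) := fun m => by
    rw [integral_indicator measurableSet_closedBall, hf]
    exact disk_int σ r hσ hr (z m)
  simp_rw [this]
  rw [Finset.prod_const, Finset.card_univ, Fintype.card_fin]

/-- Achievability: for a code from the constructed layered family whose
per-symbol decoding disks all have the same radius r, the average DEP equals
1 − (1 − e^{−r²/σ²})ⁿ, and the resulting lower bound on the radius r. -/
theorem layered_dep_common_radius
    (n M C : ℕ) (hn : 0 < n) (hM : 0 < M)
    (σ P ε : ℝ) (hσ : 0 < σ) (hε₀ : 0 < ε) (hε₁ : ε < 1)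
    -- the layered constellation
    (Lc : Fin C → ℕ) (A : Fin C → ℝ) (α : Fin C → ℝ)
    (hA : ∀ c, 0 < A c) (hAanti : StrictAnti A)
    -- the common radius of the decoding disks
    (r : ℝ) (hr : 0 < r)
    (sym : ((c : Fin C) × Fin (Lc c)) → ℂ)
    (hsym : ∀ s : (c : Fin C) × Fin (Lc c),
      sym s = Complex.ofReal (A s.1) *
        Complex.exp (Complex.I * Complex.ofReal
          (2 * Real.pi * ((s.2 : ℕ) : ℝ) / ((Lc s.1 : ℕ) : ℝ) + α s.1)))
    (hamp : ∀ s : (c : Fin C) × Fin (Lc c), ‖sym s‖ ≤ P)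
    -- the decoding disks are pairwise disjoint
    (hdisj : ∀ s t : (c : Fin C) × Fin (Lc c), s ≠ t →
      Disjoint (Metric.closedBall (sym s) r) (Metric.closedBall (sym t) r))
    -- the codewords (as sequences of symbols of the constellation)
    (w : Fin M → Fin n → (c : Fin C) × Fin (Lc c)) :
    avgDEP n M σ sym (fun _ => r) w = 1 - (1 - Real.exp (-r ^ 2 / σ ^ 2)) ^ n ∧
    (avgDEP n M σ sym (fun _ => r) w ≤ ε →
      r ≥ Real.sqrt (σ ^ 2 *
        Real.log (1 / (1 - (1 - ε) ^ ((1 : ℝ) / (n : ℝ)))))) := by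
  have hM0 : (M : ℝ) ≠ 0 := Nat.cast_ne_zero.mpr hM.ne'
  have heq : avgDEP n M σ sym (fun _ => r) w
      = 1 - (1 - Real.exp (-r ^ 2 / σ ^ 2)) ^ n := by
    unfold avgDEP
    have h1 : ∀ i : Fin M,
        (∫ y in Set.univ.pi (fun m =>
            Metric.closedBall (sym (w i m)) ((fun _ => r) (w i m))),
          ∏ m, (1 / (Real.pi * σ ^ 2)) *
            Real.exp (-(‖y m - sym (w i m)‖) ^ 2 / σ ^ 2))
        = (1 - Real.exp (-r ^ 2 / σ ^ 2)) ^ n := fun i =>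
      prod_int n σ r hσ hr (fun m => sym (w i m))
    simp_rw [h1, Finset.sum_const, Finset.card_univ, Fintype.card_fin, nsmul_eq_mul]
    field_simp
  refine ⟨heq, fun hle => ?_⟩
  rw [heq] at hle
  set E := Real.exp (-r ^ 2 / σ ^ 2) with hE
  have hE0 : 0 < E := Real.exp_pos _
  have hE1 : E < 1 := by
    rw [hE, Real.exp_lt_one_iff]
    have : 0 < r ^ 2 / σ ^ 2 := by positivity
    rw [neg_div]
    linarith
  -- from hle : 1 - (1 - E)^n ≤ ε, get (1-ε) ≤ (1-E)^n
  have hq : (1 : ℝ) - ε ≤ (1 - E) ^ n := by linarith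
  have h1E0 : (0:ℝ) < 1 - E := by linarith
  have hn' : ((n:ℝ)) ≠ 0 := Nat.cast_ne_zero.mpr hn.ne'
  have hroot : (1 - ε) ^ ((1:ℝ)/(n:ℝ)) ≤ 1 - E := by
    have h2 := Real.rpow_le_rpow (by linarith : (0:ℝ) ≤ 1 - ε) hq
      (by positivity : (0:ℝ) ≤ 1/(n:ℝ))
    calc (1 - ε) ^ ((1:ℝ)/(n:ℝ)) ≤ ((1 - E) ^ n) ^ ((1:ℝ)/(n:ℝ)) := h2
      _ = 1 - E := by
        rw [← Real.rpow_natCast (1 - E) n, ← Real.rpow_mul h1E0.le]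
        rw [mul_one_div, div_self hn', Real.rpow_one]
  set q : ℝ := 1 - (1 - ε) ^ ((1:ℝ)/(n:ℝ)) with hqdef
  have hEq : E ≤ q := by rw [hqdef]; linarith
  have hlog : Real.log E ≤ Real.log q := Real.log_le_log hE0 hEq
  rw [hE, Real.log_exp] at hlog
  have hq0 : 0 < q := lt_of_lt_of_le hE0 hEq
  have hfinal : σ ^ 2 * Real.log (1 / q) ≤ r ^ 2 := by
    rw [one_div, Real.log_inv]
    have hσ2 : (0:ℝ) < σ ^ 2 := by positivity
    have := mul_le_mul_of_nonneg_left hlog hσ2.le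
    rw [mul_div_cancel₀ _ (ne_of_gt hσ2)] at this
    nlinarith
  calc r = Real.sqrt (r ^ 2) := by rw [Real.sqrt_sq hr.le]
    _ ≥ Real.sqrt (σ ^ 2 * Real.log (1 / q)) := Real.sqrt_le_sqrt hfinal
end
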